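/- There exists a homomorphism of S-algebras ι₁ : bH_n(q) → E_n(q) satisfying ι₁(e_i) = e_i and ι₁(z_i) = e_i g_i for all i ∈ {1,…,n−1}. -/
import Mathlib


open scoped Classical

noncomputable section

/-- The ground ring `S = ℂ[q, q⁻¹]` of Laurent polynomials. -/
abbrev SS : Type := LaurentPolynomial ℂ

/-- The indeterminate `q ∈ S`. -/
def qq : SS := LaurentPolynomial.T 1

/-- The inverse `q⁻¹ ∈ S` of the indeterminate. -/
def qqi : SS := LaurentPolynomial.T (-1)

/-- Generators `e_1,…,e_{n−1}, z_1,…,z_{n−1}` of the tied–boxed Hecke algebra. -/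
inductive BHGen (n : ℕ) : Type
  | e : Fin (n - 1) → BHGen n
  | z : Fin (n - 1) → BHGen n

/-- The defining relations of the tied–boxed Hecke algebra `bH_n(q)`:
`e_i² = e_i`, `e_i e_j = e_j e_i`, the braid relations for the `z_i`,
`z_i z_j = z_j z_i` for `|i−j| > 1`, `e_i z_i = z_i`, `e_i z_j = z_j e_i`, and
`z_i² = e_i + (q − q⁻¹) z_i`. -/
inductive BHRel (n : ℕ) : FreeAlgebra SS (BHGen n) → FreeAlgebra SS (BHGen n) → Prop
  | esq (i : Fin (n - 1)) :
      BHRel n (FreeAlgebra.ι SS (BHGen.e i) * FreeAlgebra.ι SS (BHGen.e i))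
        (FreeAlgebra.ι SS (BHGen.e i))
  | ecomm (i j : Fin (n - 1)) :
      BHRel n (FreeAlgebra.ι SS (BHGen.e i) * FreeAlgebra.ι SS (BHGen.e j))
        (FreeAlgebra.ι SS (BHGen.e j) * FreeAlgebra.ι SS (BHGen.e i))
  | braid (i j : Fin (n - 1)) (h : Nat.dist i.1 j.1 = 1) :
      BHRel n
        (FreeAlgebra.ι SS (BHGen.z i) * FreeAlgebra.ι SS (BHGen.z j) *
          FreeAlgebra.ι SS (BHGen.z i))
        (FreeAlgebra.ι SS (BHGen.z j) * FreeAlgebra.ι SS (BHGen.z i) *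
          FreeAlgebra.ι SS (BHGen.z j))
  | zcomm (i j : Fin (n - 1)) (h : 1 < Nat.dist i.1 j.1) :
      BHRel n (FreeAlgebra.ι SS (BHGen.z i) * FreeAlgebra.ι SS (BHGen.z j))
        (FreeAlgebra.ι SS (BHGen.z j) * FreeAlgebra.ι SS (BHGen.z i))
  | ez (i : Fin (n - 1)) :
      BHRel n (FreeAlgebra.ι SS (BHGen.e i) * FreeAlgebra.ι SS (BHGen.z i))
        (FreeAlgebra.ι SS (BHGen.z i))
  | ezcomm (i j : Fin (n - 1)) :
      BHRel n (FreeAlgebra.ι SS (BHGen.e i) * FreeAlgebra.ι SS (BHGen.z j))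
        (FreeAlgebra.ι SS (BHGen.z j) * FreeAlgebra.ι SS (BHGen.e i))
  | quad (i : Fin (n - 1)) :
      BHRel n (FreeAlgebra.ι SS (BHGen.z i) * FreeAlgebra.ι SS (BHGen.z i))
        (FreeAlgebra.ι SS (BHGen.e i) + (qq - qqi) • FreeAlgebra.ι SS (BHGen.z i))

/-- The tied–boxed Hecke algebra `bH_n(q)`, as the quotient of the free `S`-algebra on
the generators by the two-sided ideal generated by the defining relations. -/
abbrev BH (n : ℕ) : Type := RingQuot (BHRel n)

/-- The generator `e_i` of `bH_n(q)`. -/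
def bhE {n : ℕ} (i : Fin (n - 1)) : BH n :=
  RingQuot.mkAlgHom SS (BHRel n) (FreeAlgebra.ι SS (BHGen.e i))

/-- The generator `z_i` of `bH_n(q)`. -/
def bhZ {n : ℕ} (i : Fin (n - 1)) : BH n :=
  RingQuot.mkAlgHom SS (BHRel n) (FreeAlgebra.ι SS (BHGen.z i))

/-- Generators `e_1,…,e_{n−1}, g_1,…,g_{n−1}` of the algebra of braids and ties. -/
inductive BTGen (n : ℕ) : Type
  | e : Fin (n - 1) → BTGen n
  | g : Fin (n - 1) → BTGen n

/-- The defining relations of the algebra of braids and ties `E_n(q)`. -/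
inductive BTRel (n : ℕ) : FreeAlgebra SS (BTGen n) → FreeAlgebra SS (BTGen n) → Prop
  | esq (i : Fin (n - 1)) :
      BTRel n (FreeAlgebra.ι SS (BTGen.e i) * FreeAlgebra.ι SS (BTGen.e i))
        (FreeAlgebra.ι SS (BTGen.e i))
  | ecomm (i j : Fin (n - 1)) :
      BTRel n (FreeAlgebra.ι SS (BTGen.e i) * FreeAlgebra.ι SS (BTGen.e j))
        (FreeAlgebra.ι SS (BTGen.e j) * FreeAlgebra.ι SS (BTGen.e i))
  | braid (i j : Fin (n - 1)) (h : Nat.dist i.1 j.1 = 1) :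
      BTRel n
        (FreeAlgebra.ι SS (BTGen.g i) * FreeAlgebra.ι SS (BTGen.g j) *
          FreeAlgebra.ι SS (BTGen.g i))
        (FreeAlgebra.ι SS (BTGen.g j) * FreeAlgebra.ι SS (BTGen.g i) *
          FreeAlgebra.ι SS (BTGen.g j))
  | gcomm (i j : Fin (n - 1)) (h : 1 < Nat.dist i.1 j.1) :
      BTRel n (FreeAlgebra.ι SS (BTGen.g i) * FreeAlgebra.ι SS (BTGen.g j))
        (FreeAlgebra.ι SS (BTGen.g j) * FreeAlgebra.ι SS (BTGen.g i))
  | ge (i : Fin (n - 1)) :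
      BTRel n (FreeAlgebra.ι SS (BTGen.g i) * FreeAlgebra.ι SS (BTGen.e i))
        (FreeAlgebra.ι SS (BTGen.e i) * FreeAlgebra.ι SS (BTGen.g i))
  | gecomm (i j : Fin (n - 1)) (h : 1 < Nat.dist i.1 j.1) :
      BTRel n (FreeAlgebra.ι SS (BTGen.g i) * FreeAlgebra.ι SS (BTGen.e j))
        (FreeAlgebra.ι SS (BTGen.e j) * FreeAlgebra.ι SS (BTGen.g i))
  | egg (i j : Fin (n - 1)) (h : Nat.dist i.1 j.1 = 1) :
      BTRel n
        (FreeAlgebra.ι SS (BTGen.e i) * FreeAlgebra.ι SS (BTGen.g j) *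
          FreeAlgebra.ι SS (BTGen.g i))
        (FreeAlgebra.ι SS (BTGen.g j) * FreeAlgebra.ι SS (BTGen.g i) *
          FreeAlgebra.ι SS (BTGen.e j))
  | eeg (i j : Fin (n - 1)) (h : Nat.dist i.1 j.1 = 1) :
      BTRel n
        (FreeAlgebra.ι SS (BTGen.e i) * FreeAlgebra.ι SS (BTGen.e j) *
          FreeAlgebra.ι SS (BTGen.g j))
        (FreeAlgebra.ι SS (BTGen.e i) * FreeAlgebra.ι SS (BTGen.g j) *
          FreeAlgebra.ι SS (BTGen.e i))
  | ege (i j : Fin (n - 1)) (h : Nat.dist i.1 j.1 = 1) :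
      BTRel n
        (FreeAlgebra.ι SS (BTGen.e i) * FreeAlgebra.ι SS (BTGen.g j) *
          FreeAlgebra.ι SS (BTGen.e i))
        (FreeAlgebra.ι SS (BTGen.g j) * FreeAlgebra.ι SS (BTGen.e i) *
          FreeAlgebra.ι SS (BTGen.e j))
  | quad (i : Fin (n - 1)) :
      BTRel n (FreeAlgebra.ι SS (BTGen.g i) * FreeAlgebra.ι SS (BTGen.g i))
        (1 + (qq - qqi) • (FreeAlgebra.ι SS (BTGen.e i) * FreeAlgebra.ι SS (BTGen.g i)))

/-- The algebra of braids and ties `E_n(q)`, as the quotient of the free `S`-algebra on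
the generators by the two-sided ideal generated by the defining relations. -/
abbrev BT (n : ℕ) : Type := RingQuot (BTRel n)

/-- The generator `e_i` of `E_n(q)`. -/
def btE {n : ℕ} (i : Fin (n - 1)) : BT n :=
  RingQuot.mkAlgHom SS (BTRel n) (FreeAlgebra.ι SS (BTGen.e i))

/-- The generator `g_i` of `E_n(q)`. -/
def btG {n : ℕ} (i : Fin (n - 1)) : BT n :=
  RingQuot.mkAlgHom SS (BTRel n) (FreeAlgebra.ι SS (BTGen.g i))

end


noncomputable section Aux

variable {n : ℕ}

open RingQuot

lemma btE_sq (i : Fin (n - 1)) : btE (n := n) i * btE i = btE i := by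
  simpa only [btE, map_mul] using RingQuot.mkAlgHom_rel SS (BTRel.esq (n := n) i)

lemma btE_comm (i j : Fin (n - 1)) : btE (n := n) i * btE j = btE j * btE i := by
  simpa only [btE, map_mul] using RingQuot.mkAlgHom_rel SS (BTRel.ecomm (n := n) i j)

lemma btG_braid (i j : Fin (n - 1)) (h : Nat.dist i.1 j.1 = 1) :
    btG (n := n) i * btG j * btG i = btG j * btG i * btG j := by
  simpa only [btG, map_mul] using RingQuot.mkAlgHom_rel SS (BTRel.braid (n := n) i j h)

lemma btG_comm (i j : Fin (n - 1)) (h : 1 < Nat.dist i.1 j.1) :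
    btG (n := n) i * btG j = btG j * btG i := by
  simpa only [btG, map_mul] using RingQuot.mkAlgHom_rel SS (BTRel.gcomm (n := n) i j h)

lemma btGE (i : Fin (n - 1)) : btG (n := n) i * btE i = btE i * btG i := by
  simpa only [btG, btE, map_mul] using RingQuot.mkAlgHom_rel SS (BTRel.ge (n := n) i)

lemma btGE_comm (i j : Fin (n - 1)) (h : 1 < Nat.dist i.1 j.1) :
    btG (n := n) i * btE j = btE j * btG i := by
  simpa only [btG, btE, map_mul] using RingQuot.mkAlgHom_rel SS (BTRel.gecomm (n := n) i j h)

lemma btEEG (i j : Fin (n - 1)) (h : Nat.dist i.1 j.1 = 1) :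
    btE (n := n) i * btE j * btG j = btE i * btG j * btE i := by
  simpa only [btG, btE, map_mul] using RingQuot.mkAlgHom_rel SS (BTRel.eeg (n := n) i j h)

lemma btEGE (i j : Fin (n - 1)) (h : Nat.dist i.1 j.1 = 1) :
    btE (n := n) i * btG j * btE i = btG j * btE i * btE j := by
  simpa only [btG, btE, map_mul] using RingQuot.mkAlgHom_rel SS (BTRel.ege (n := n) i j h)

lemma btG_quad (i : Fin (n - 1)) :
    btG (n := n) i * btG i = 1 + (qq - qqi) • (btE i * btG i) := by
  simpa only [btG, btE, map_mul, map_add, map_one, map_smul] using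
    RingQuot.mkAlgHom_rel SS (BTRel.quad (n := n) i)

/-- `e_i e_j g_j = g_j e_i e_j` for `|i-j| = 1`. -/
lemma btEEG' (i j : Fin (n - 1)) (h : Nat.dist i.1 j.1 = 1) :
    btE (n := n) i * btE j * btG j = btG j * (btE i * btE j) := by
  rw [btEEG i j h, btEGE i j h, mul_assoc]

/-- `e_i e_j g_i = g_i (e_i e_j)` for `|i-j| = 1`. -/
lemma btEEG'' (i j : Fin (n - 1)) (h : Nat.dist i.1 j.1 = 1) :
    btE (n := n) i * btE j * btG i = btG i * (btE i * btE j) := by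
  have h' : Nat.dist j.1 i.1 = 1 := by rwa [Nat.dist_comm]
  rw [btE_comm i j, btEEG' j i h', btE_comm j i]

/-- `z_i z_j = g_i g_j (e_i e_j)` for `|i-j| = 1`. -/
lemma btZZ (i j : Fin (n - 1)) (h : Nat.dist i.1 j.1 = 1) :
    (btE (n := n) i * btG i) * (btE j * btG j) = btG i * btG j * (btE i * btE j) := by
  calc (btE i * btG i) * (btE j * btG j)
      = (btG i * btE i) * (btE j * btG j) := by rw [btGE]
    _ = btG i * (btE i * btE j * btG j) := by noncomm_ring
    _ = btG i * (btG j * (btE i * btE j)) := by rw [btEEG' i j h]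
    _ = btG i * btG j * (btE i * btE j) := by noncomm_ring

/-- The braid relation for `z_i = e_i g_i`, `|i-j| = 1`. -/
lemma btZbraid (i j : Fin (n - 1)) (h : Nat.dist i.1 j.1 = 1) :
    (btE (n := n) i * btG i) * (btE j * btG j) * (btE i * btG i) =
      (btE j * btG j) * (btE i * btG i) * (btE j * btG j) := by
  have h' : Nat.dist j.1 i.1 = 1 := by rwa [Nat.dist_comm]
  have key : ∀ a b : Fin (n - 1), Nat.dist a.1 b.1 = 1 →
      (btE (n := n) a * btG a) * (btE b * btG b) * (btE a * btG a) =
        btG a * btG b * btG a * (btE a * btE b) := by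
    intro a b hab
    calc (btE a * btG a) * (btE b * btG b) * (btE a * btG a)
        = btG a * btG b * (btE a * btE b) * (btE a * btG a) := by rw [btZZ a b hab]
      _ = btG a * btG b * (btE a * (btE b * btE a) * btG a) := by noncomm_ring
      _ = btG a * btG b * (btE a * (btE a * btE b) * btG a) := by rw [btE_comm b a]
      _ = btG a * btG b * ((btE a * btE a) * btE b * btG a) := by noncomm_ring
      _ = btG a * btG b * (btE a * btE b * btG a) := by rw [btE_sq]
      _ = btG a * btG b * (btG a * (btE a * btE b)) := by rw [btEEG'' a b hab]
      _ = btG a * btG b * btG a * (btE a * btE b) := by noncomm_ring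
  rw [key i j h, key j i h', btG_braid i j h, btE_comm j i]

/-- `z_i z_j = z_j z_i` for `|i-j| > 1`. -/
lemma btZcomm (i j : Fin (n - 1)) (h : 1 < Nat.dist i.1 j.1) :
    (btE (n := n) i * btG i) * (btE j * btG j) = (btE j * btG j) * (btE i * btG i) := by
  have h' : 1 < Nat.dist j.1 i.1 := by rwa [Nat.dist_comm]
  calc (btE i * btG i) * (btE j * btG j)
      = btE i * (btG i * btE j) * btG j := by noncomm_ring
    _ = btE i * (btE j * btG i) * btG j := by rw [btGE_comm i j h]
    _ = (btE i * btE j) * (btG i * btG j) := by noncomm_ring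
    _ = (btE j * btE i) * (btG j * btG i) := by rw [btE_comm i j, btG_comm i j h]
    _ = btE j * (btE i * btG j) * btG i := by noncomm_ring
    _ = btE j * (btG j * btE i) * btG i := by rw [← btGE_comm j i h']
    _ = (btE j * btG j) * (btE i * btG i) := by noncomm_ring

/-- `e_i z_j = z_j e_i` for all `i, j`. -/
lemma btEZcomm (i j : Fin (n - 1)) :
    btE (n := n) i * (btE j * btG j) = (btE j * btG j) * btE i := by
  rcases Nat.lt_trichotomy (Nat.dist i.1 j.1) 1 with hd | hd | hd
  · -- dist = 0, so i = j
    have hij : i = j := by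
      have : i.1 = j.1 := Nat.eq_of_dist_eq_zero (Nat.lt_one_iff.mp hd)
      exact Fin.ext this
    subst hij
    calc btE i * (btE i * btG i) = (btE i * btE i) * btG i := by noncomm_ring
      _ = btE i * btG i := by rw [btE_sq]
      _ = (btE i * btE i) * btG i := by rw [btE_sq]
      _ = btE i * (btG i * btE i) := by rw [mul_assoc, ← btGE]
      _ = (btE i * btG i) * btE i := by noncomm_ring
  · -- dist = 1
    calc btE i * (btE j * btG j) = btE i * btE j * btG j := by noncomm_ring
      _ = btG j * (btE i * btE j) := btEEG' i j hd
      _ = btG j * (btE j * btE i) := by rw [btE_comm i j]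
      _ = (btG j * btE j) * btE i := by noncomm_ring
      _ = (btE j * btG j) * btE i := by rw [btGE]
  · -- dist > 1
    have h' : 1 < Nat.dist j.1 i.1 := by rwa [Nat.dist_comm]
    calc btE i * (btE j * btG j) = btE j * (btE i * btG j) := by
          rw [← mul_assoc, btE_comm i j, mul_assoc]
      _ = btE j * (btG j * btE i) := by rw [← btGE_comm j i h']
      _ = (btE j * btG j) * btE i := by noncomm_ring

/-- `e_i z_i = z_i`. -/
lemma btEZ (i : Fin (n - 1)) :
    btE (n := n) i * (btE i * btG i) = btE i * btG i := by
  rw [← mul_assoc, btE_sq]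

/-- `z_i² = e_i + (q - q⁻¹) z_i`. -/
lemma btZquad (i : Fin (n - 1)) :
    (btE (n := n) i * btG i) * (btE i * btG i) = btE i + (qq - qqi) • (btE i * btG i) := by
  calc (btE i * btG i) * (btE i * btG i)
      = btE i * (btG i * btE i) * btG i := by noncomm_ring
    _ = btE i * (btE i * btG i) * btG i := by rw [btGE]
    _ = (btE i * btE i) * (btG i * btG i) := by noncomm_ring
    _ = btE i * (btG i * btG i) := by rw [btE_sq]
    _ = btE i * (1 + (qq - qqi) • (btE i * btG i)) := by rw [btG_quad]
    _ = btE i + (qq - qqi) • ((btE i * btE i) * btG i) := by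
        rw [mul_add, mul_one, mul_smul_comm, ← mul_assoc]
    _ = btE i + (qq - qqi) • (btE i * btG i) := by rw [btE_sq]

/-- The map on generators. -/
def iotaGen (n : ℕ) : BHGen n → BT n
  | BHGen.e i => btE i
  | BHGen.z i => btE i * btG i

lemma iota_rel (x y : FreeAlgebra SS (BHGen n)) (h : BHRel n x y) :
    FreeAlgebra.lift SS (iotaGen n) x = FreeAlgebra.lift SS (iotaGen n) y := by
  induction h with
  | esq i => simp only [map_mul, FreeAlgebra.lift_ι_apply, iotaGen]; exact btE_sq i
  | ecomm i j => simp only [map_mul, FreeAlgebra.lift_ι_apply, iotaGen]; exact btE_comm i j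
  | braid i j h =>
      simp only [map_mul, FreeAlgebra.lift_ι_apply, iotaGen]; exact btZbraid i j h
  | zcomm i j h =>
      simp only [map_mul, FreeAlgebra.lift_ι_apply, iotaGen]; exact btZcomm i j h
  | ez i => simp only [map_mul, FreeAlgebra.lift_ι_apply, iotaGen]; exact btEZ i
  | ezcomm i j =>
      simp only [map_mul, FreeAlgebra.lift_ι_apply, iotaGen]; exact btEZcomm i j
  | quad i =>
      simp only [map_mul, map_add, map_smul, FreeAlgebra.lift_ι_apply, iotaGen]
      exact btZquad i

end Aux

/-- there is a homomorphism of `S`-algebras `ι₁ : bH_n(q) → E_n(q)`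
satisfying `ι₁(e_i) = e_i` and `ι₁(z_i) = e_i g_i` for all `i`. -/
theorem exists_iota1 (n : ℕ) :
    ∃ f : BH n →ₐ[SS] BT n,
      (∀ i : Fin (n - 1), f (bhE i) = btE i) ∧
      (∀ i : Fin (n - 1), f (bhZ i) = btE i * btG i) := by
  refine ⟨RingQuot.liftAlgHom SS ⟨FreeAlgebra.lift SS (iotaGen n), iota_rel⟩, ?_, ?_⟩
  · intro i
    rw [bhE, RingQuot.liftAlgHom_mkAlgHom_apply]
    simp [iotaGen]
  · intro i
    rw [bhZ, RingQuot.liftAlgHom_mkAlgHom_apply]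
    simp [iotaGen]
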